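/- Let X ∈ ℝ^{m×n} with every row standard deviation σ_i(X) positive and set σ_min = min_i σ_i(X). Then for all directions U, V ∈ ℝ^{m×n}, the second Fréchet derivative of LayerNorm at X satisfies ‖D²LayerNorm(X)[U, V]‖_F ≤ [ (‖X‖₂/σ_min³)·(1 + sqrt(m/n)) + ‖X‖₂²/(√n·σ_min³) + 3·‖X‖₂³/(n·σ_min⁵) ]·‖U‖_F·‖V‖_F. -/

import Mathlib

noncomputable section

open Matrix

attribute [local instance] Matrix.frobeniusNormedAddCommGroup Matrix.frobeniusNormedSpace

/-- Frobenius norm of a real matrix. -/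
def frob {m n : ℕ} (A : Matrix (Fin m) (Fin n) ℝ) : ℝ :=
  Real.sqrt (∑ i, ∑ j, A i j ^ 2)

/-- Spectral norm (largest singular value) of a real matrix: the operator norm of the
associated linear map between Euclidean spaces. -/
def spec {m n : ℕ} (A : Matrix (Fin m) (Fin n) ℝ) : ℝ :=
  ‖LinearMap.toContinuousLinearMap (Matrix.toEuclideanLin A)‖

/-- Centering matrix `C = Iₙ - (1/n)·𝟙𝟙ᵀ`. -/
def centerC (n : ℕ) : Matrix (Fin n) (Fin n) ℝ :=
  1 - (n : ℝ)⁻¹ • Matrix.of (fun _ _ => (1 : ℝ))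

/-- Row-centered matrix `M(X) = X·C`. -/
def centered {m n : ℕ} (X : Matrix (Fin m) (Fin n) ℝ) : Matrix (Fin m) (Fin n) ℝ :=
  X * centerC n

/-- Row standard deviations `σᵢ(X) = sqrt((1/n)·Σⱼ M(X)ᵢⱼ²)`. -/
def rowSigma {m n : ℕ} (X : Matrix (Fin m) (Fin n) ℝ) (i : Fin m) : ℝ :=
  Real.sqrt ((n : ℝ)⁻¹ * ∑ j, centered X i j ^ 2)

/-- `P(X) = diag(σ₁(X),…,σ_m(X))⁻¹`. -/
def Pmat {m n : ℕ} (X : Matrix (Fin m) (Fin n) ℝ) : Matrix (Fin m) (Fin m) ℝ :=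
  Matrix.diagonal fun i => (rowSigma X i)⁻¹

/-- `LayerNorm(X) = P(X)·M(X)`. -/
def layerNorm {m n : ℕ} (X : Matrix (Fin m) (Fin n) ℝ) : Matrix (Fin m) (Fin n) ℝ :=
  Pmat X * centered X

section Aux

variable {m n : ℕ}

abbrev Emat (m n : ℕ) := Matrix (Fin m) (Fin n) ℝ

lemma centered_add (Y U : Emat m n) : centered (Y + U) = centered Y + centered U := by
  simp [centered, Matrix.add_mul]

lemma centered_smul (c : ℝ) (Y : Emat m n) : centered (c • Y) = c • centered Y := by
  simp [centered, Matrix.smul_mul]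

/-- entry of centered as a continuous linear functional -/
def centf (i : Fin m) (j : Fin n) : Emat m n →L[ℝ] ℝ :=
  LinearMap.toContinuousLinearMap
    { toFun := fun Y => centered Y i j
      map_add' := fun Y U => by simp only [centered_add]; rfl
      map_smul' := fun c Y => by simp only [centered_smul]; rfl }

@[simp] lemma centf_apply (i : Fin m) (j : Fin n) (Y : Emat m n) :
    centf i j Y = centered Y i j := rfl

def af (Y U : Emat m n) (i : Fin m) : ℝ :=
  (n : ℝ)⁻¹ * ∑ j, centered Y i j * centered U i j

lemma af_comm (Y U : Emat m n) (i : Fin m) : af Y U i = af U Y i := by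
  simp [af, mul_comm]

def aClm (Y : Emat m n) (i : Fin m) : Emat m n →L[ℝ] ℝ :=
  LinearMap.toContinuousLinearMap
    { toFun := fun U => af Y U i
      map_add' := fun U V => by
        simp [af, centered_add, mul_add, Finset.sum_add_distrib, Matrix.add_apply]
      map_smul' := fun c U => by
        simp only [af, centered_smul, Matrix.smul_apply, smul_eq_mul, RingHom.id_apply,
          Finset.mul_sum]
        exact Finset.sum_congr rfl fun j _ => by ring }

@[simp] lemma aClm_apply (Y : Emat m n) (i : Fin m) (U : Emat m n) :
    aClm Y i U = af Y U i := rfl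

lemma rowSigma_eq (Y : Emat m n) (i : Fin m) : rowSigma Y i = Real.sqrt (af Y Y i) := by
  simp [rowSigma, af, sq]

lemma af_self_nonneg (Y : Emat m n) (i : Fin m) : 0 ≤ af Y Y i := by
  apply mul_nonneg (by positivity)
  exact Finset.sum_nonneg fun j _ => mul_self_nonneg _

lemma sq_rowSigma (Y : Emat m n) (i : Fin m) : rowSigma Y i ^ 2 = af Y Y i := by
  rw [rowSigma_eq, Real.sq_sqrt (af_self_nonneg Y i)]

lemma hasFDerivAt_afself (Y : Emat m n) (i : Fin m) :
    HasFDerivAt (fun Z => af Z Z i) ((2 : ℝ) • aClm Y i) Y := by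
  have h : ∀ Z : Emat m n, af Z Z i = (n : ℝ)⁻¹ * ∑ j, centf i j Z * centf i j Z := by
    intro Z; rfl
  have := HasFDerivAt.const_mul
    (HasFDerivAt.fun_sum (fun j (_ : j ∈ Finset.univ) =>
      ((centf i j).hasFDerivAt (x := Y)).fun_mul ((centf i j).hasFDerivAt (x := Y)))) ((n : ℝ)⁻¹)
  simp only [← h] at this
  refine this.congr_fderiv ?_
  have e : (2 : ℝ) • aClm Y i = ((n : ℝ)⁻¹ • ∑ j, ((centf i j) Y • centf i j + (centf i j) Y • centf i j) :
      Emat m n →L[ℝ] ℝ) := by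
    ext U
    simp only [ContinuousLinearMap.smul_apply, aClm_apply, ContinuousLinearMap.coe_smul',
      Pi.smul_apply, ContinuousLinearMap.coe_sum', Finset.sum_apply, ContinuousLinearMap.add_apply,
      ContinuousLinearMap.coe_mul, smul_eq_mul, centf_apply, ContinuousLinearMap.smul_apply]
    simp only [af, Finset.mul_sum]
    exact Finset.sum_congr rfl fun j _ => by ring
  exact e.symm

lemma hasFDerivAt_rowSigma {Y : Emat m n} {i : Fin m} (h : 0 < rowSigma Y i) :
    HasFDerivAt (fun Z => rowSigma Z i) ((rowSigma Y i)⁻¹ • aClm Y i) Y := by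
  have hq : (0:ℝ) < af Y Y i := by
    have := sq_rowSigma Y i; nlinarith [h]
  have hs := (Real.hasDerivAt_sqrt (ne_of_gt hq)).comp_hasFDerivAt Y (hasFDerivAt_afself Y i)
  have hfun : (fun Z : Emat m n => rowSigma Z i)
      = (fun x => Real.sqrt x) ∘ (fun Z => af Z Z i) := funext fun Z => rowSigma_eq Z i
  rw [hfun]
  have h2 : (1 / (2 * Real.sqrt (af Y Y i))) • ((2:ℝ) • aClm Y i)
      = (rowSigma Y i)⁻¹ • aClm Y i := by
    rw [← rowSigma_eq]
    ext U
    simp [smul_eq_mul]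
    field_simp
  rw [← h2]; exact hs

lemma hasFDerivAt_sigmaInv {Y : Emat m n} {i : Fin m} (h : 0 < rowSigma Y i) :
    HasFDerivAt (fun Z => (rowSigma Z i)⁻¹) ((-(rowSigma Y i)⁻¹ ^ 3) • aClm Y i) Y := by
  have hs := (hasDerivAt_inv (ne_of_gt h)).comp_hasFDerivAt Y (hasFDerivAt_rowSigma h)
  have h2 : (-(rowSigma Y i ^ 2)⁻¹ : ℝ) • ((rowSigma Y i)⁻¹ • aClm Y i)
      = (-(rowSigma Y i)⁻¹ ^ 3) • aClm Y i := by
    ext U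
    simp [smul_eq_mul]
    field_simp
  rw [← h2]; exact hs

lemma layerNorm_apply (Y : Emat m n) (i : Fin m) (j : Fin n) :
    layerNorm Y i j = (rowSigma Y i)⁻¹ * centered Y i j := by
  simp [layerNorm, Pmat, Matrix.diagonal_mul]

/-- identity continuous linear equivalence between `Matrix` with the Frobenius norm and
the pi type. -/
def eLN (m n : ℕ) : Emat m n ≃L[ℝ] (Fin m → Fin n → ℝ) :=
  LinearEquiv.toContinuousLinearEquiv (LinearEquiv.refl ℝ (Matrix (Fin m) (Fin n) ℝ))

@[simp] lemma eLN_apply (Y : Emat m n) : eLN m n Y = Y := rfl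
@[simp] lemma eLN_symm_apply (Y : Fin m → Fin n → ℝ) : (eLN m n).symm Y = Y := rfl

/-- derivative of the `(i,j)` entry of layerNorm -/
def dComp (Y : Emat m n) (i : Fin m) (j : Fin n) : Emat m n →L[ℝ] ℝ :=
  (rowSigma Y i)⁻¹ • centf i j + centered Y i j • ((-(rowSigma Y i)⁻¹ ^ 3) • aClm Y i)

lemma hasFDerivAt_comp (Y : Emat m n) {i : Fin m} (j : Fin n) (h : 0 < rowSigma Y i) :
    HasFDerivAt (fun Z => layerNorm Z i j) (dComp Y i j) Y := by
  have hc := hasFDerivAt_sigmaInv h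
  have hd := (centf i j).hasFDerivAt (x := Y)
  have := hc.mul hd
  simp only [centf_apply] at this
  have hfun : (fun Z : Emat m n => layerNorm Z i j)
      = fun Z => (rowSigma Z i)⁻¹ * centered Z i j := funext fun Z => layerNorm_apply Z i j
  rw [hfun]
  exact this

def D1 (Y : Emat m n) : Emat m n →L[ℝ] Emat m n :=
  ((eLN m n).symm : (Fin m → Fin n → ℝ) →L[ℝ] Emat m n).comp
    (ContinuousLinearMap.pi fun i => ContinuousLinearMap.pi fun j => dComp Y i j)

lemma hasFDerivAt_layerNorm {Y : Emat m n} (hY : ∀ i, 0 < rowSigma Y i) :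
    HasFDerivAt (fun Z : Emat m n => layerNorm Z) (D1 Y) Y := by
  have hpi : HasFDerivAt (fun Z : Emat m n => (fun i j => layerNorm Z i j : Fin m → Fin n → ℝ))
      (ContinuousLinearMap.pi fun i => ContinuousLinearMap.pi fun j => dComp Y i j) Y := by
    apply hasFDerivAt_pi''
    intro i
    apply hasFDerivAt_pi''
    intro j
    exact hasFDerivAt_comp Y j (hY i)
  have := (((eLN m n).symm : (Fin m → Fin n → ℝ) →L[ℝ] Emat m n).hasFDerivAt).comp Y hpi
  exact this

lemma D1_apply (Y V : Emat m n) (i : Fin m) (j : Fin n) :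
    D1 Y V i j = (rowSigma Y i)⁻¹ * centered V i j
      - (rowSigma Y i)⁻¹ ^ 3 * af Y V i * centered Y i j := by
  simp [D1, dComp, ContinuousLinearMap.pi_apply]
  ring

lemma continuous_rowSigma (i : Fin m) : Continuous fun Z : Emat m n => rowSigma Z i := by
  have : (fun Z : Emat m n => rowSigma Z i)
      = fun Z => Real.sqrt (af Z Z i) := funext fun Z => rowSigma_eq Z i
  rw [this]
  apply Real.continuous_sqrt.comp
  exact continuous_const.mul (continuous_finset_sum _ fun j _ =>
    ((centf i j).continuous.mul (centf i j).continuous))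

lemma isOpen_good : IsOpen {Z : Emat m n | ∀ i, 0 < rowSigma Z i} := by
  have : {Z : Emat m n | ∀ i, 0 < rowSigma Z i}
      = ⋂ i, (fun Z => rowSigma Z i) ⁻¹' Set.Ioi 0 := by
    ext Z; simp [Set.mem_iInter]
  rw [this]
  exact isOpen_iInter_of_finite fun i => (continuous_rowSigma i).isOpen_preimage _ isOpen_Ioi

lemma contDiffAt_layerNorm {Y : Emat m n} (hY : ∀ i, 0 < rowSigma Y i) :
    ContDiffAt ℝ 2 (fun Z : Emat m n => layerNorm Z) Y := by
  have hcomp : ∀ (i : Fin m) (j : Fin n),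
      ContDiffAt ℝ 2 (fun Z : Emat m n => layerNorm Z i j) Y := by
    intro i j
    have hq : (0:ℝ) < af Y Y i := by
      have := sq_rowSigma Y i; nlinarith [hY i]
    have hqC : ContDiff ℝ 2 (fun Z : Emat m n => af Z Z i) := by
      exact contDiff_const.mul (ContDiff.sum fun j _ =>
        ((centf i j).contDiff.mul (centf i j).contDiff))
    have hsig : ContDiffAt ℝ 2 (fun Z : Emat m n => rowSigma Z i) Y := by
      have : (fun Z : Emat m n => rowSigma Z i)
          = fun Z => Real.sqrt (af Z Z i) := funext fun Z => rowSigma_eq Z i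
      rw [this]
      exact (Real.contDiffAt_sqrt (ne_of_gt hq)).comp Y hqC.contDiffAt
    have hinv : ContDiffAt ℝ 2 (fun Z : Emat m n => (rowSigma Z i)⁻¹) Y :=
      hsig.inv (ne_of_gt (hY i))
    have : (fun Z : Emat m n => layerNorm Z i j)
        = fun Z => (rowSigma Z i)⁻¹ * centered Z i j := funext fun Z => layerNorm_apply Z i j
    rw [this]
    exact hinv.mul (centf i j).contDiff.contDiffAt
  have hpi : ContDiffAt ℝ 2
      (fun Z : Emat m n => (fun i j => layerNorm Z i j : Fin m → Fin n → ℝ)) Y := by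
    rw [contDiffAt_pi]
    intro i
    rw [contDiffAt_pi]
    intro j
    exact hcomp i j
  exact ContDiffAt.continuousLinearMap_comp ((eLN m n).symm : (Fin m → Fin n → ℝ) →L[ℝ] Emat m n) hpi

lemma differentiableAt_fderiv_layerNorm {X : Emat m n} (hσ : ∀ i, 0 < rowSigma X i) :
    DifferentiableAt ℝ (fderiv ℝ (fun Z : Emat m n => layerNorm Z)) X := by
  have h := (contDiffAt_layerNorm hσ).fderiv_right (m := 1) (by norm_num)
  exact h.differentiableAt one_ne_zero

/-- entries of the second derivative -/
def D2c (X U V : Emat m n) (i : Fin m) (j : Fin n) : ℝ :=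
  -((rowSigma X i)⁻¹ ^ 3 * af X U i * centered V i j)
  - (rowSigma X i)⁻¹ ^ 3 * af X V i * centered U i j
  + 3 * (rowSigma X i)⁻¹ ^ 5 * af X U i * af X V i * centered X i j
  - (rowSigma X i)⁻¹ ^ 3 * af U V i * centered X i j

def d2comp (X V : Emat m n) (i : Fin m) (j : Fin n) : Emat m n →L[ℝ] ℝ :=
  (-((rowSigma X i)⁻¹ ^ 3 * centered V i j)) • aClm X i
  + (-((rowSigma X i)⁻¹ ^ 3 * af X V i)) • centf i j
  + (3 * (rowSigma X i)⁻¹ ^ 5 * af X V i * centered X i j) • aClm X i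
  + (-((rowSigma X i)⁻¹ ^ 3 * centered X i j)) • aClm V i

lemma d2comp_apply (X V : Emat m n) (i : Fin m) (j : Fin n) (U : Emat m n) :
    d2comp X V i j U = D2c X U V i j := by
  simp only [d2comp, D2c, ContinuousLinearMap.add_apply, ContinuousLinearMap.smul_apply,
    aClm_apply, centf_apply, smul_eq_mul]
  rw [af_comm V U]
  ring

lemma hasFDerivAt_D1V_comp {X : Emat m n} (hσ : ∀ i, 0 < rowSigma X i) (V : Emat m n)
    (i : Fin m) (j : Fin n) :
    HasFDerivAt (fun Y : Emat m n => D1 Y V i j) (d2comp X V i j) X := by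
  have hinv := hasFDerivAt_sigmaInv (hσ i)
  have h3 := (hinv.fun_mul hinv).fun_mul hinv
  have hb : HasFDerivAt (fun Y : Emat m n => af Y V i) (aClm V i) X := by
    have : (fun Y : Emat m n => af Y V i) = fun Y => aClm V i Y :=
      funext fun Y => (af_comm Y V i).trans rfl
    rw [this]
    exact (aClm V i).hasFDerivAt
  have hc := (centf i j).hasFDerivAt (x := X)
  change HasFDerivAt (fun Y : Emat m n => centered Y i j) (centf i j) X at hc
  have htot := ((hinv.mul_const (centered V i j)).sub (((h3.fun_mul hb)).fun_mul hc))
  have hfun : (fun Y : Emat m n => D1 Y V i j)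
      = fun Y => (rowSigma Y i)⁻¹ * centered V i j
        - (rowSigma Y i)⁻¹ * (rowSigma Y i)⁻¹ * (rowSigma Y i)⁻¹ * af Y V i * centered Y i j := by
    funext Y
    rw [D1_apply]
    ring
  rw [hfun]
  refine htot.congr_fderiv ?_
  ext U
  refine Eq.trans ?_ (d2comp_apply X V i j U).symm
  show centered V i j * (-(rowSigma X i)⁻¹ ^ 3 * af X U i)
      - ((rowSigma X i)⁻¹ * (rowSigma X i)⁻¹ * (rowSigma X i)⁻¹ * af X V i * centered U i j
        + centered X i j * ((rowSigma X i)⁻¹ * (rowSigma X i)⁻¹ * (rowSigma X i)⁻¹ * af V U i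
          + af X V i * ((rowSigma X i)⁻¹ * (rowSigma X i)⁻¹ * (-(rowSigma X i)⁻¹ ^ 3 * af X U i)
            + (rowSigma X i)⁻¹ * ((rowSigma X i)⁻¹ * (-(rowSigma X i)⁻¹ ^ 3 * af X U i)
              + (rowSigma X i)⁻¹ * (-(rowSigma X i)⁻¹ ^ 3 * af X U i))))) = D2c X U V i j
  simp only [D2c]
  rw [af_comm V U]
  ring

lemma hasFDerivAt_D1V {X : Emat m n} (hσ : ∀ i, 0 < rowSigma X i) (V : Emat m n) :
    HasFDerivAt (fun Y : Emat m n => D1 Y V)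
      (((eLN m n).symm : (Fin m → Fin n → ℝ) →L[ℝ] Emat m n).comp
        (ContinuousLinearMap.pi fun i => ContinuousLinearMap.pi fun j => d2comp X V i j)) X := by
  have hpi : HasFDerivAt (fun Y : Emat m n => (fun i j => D1 Y V i j : Fin m → Fin n → ℝ))
      (ContinuousLinearMap.pi fun i => ContinuousLinearMap.pi fun j => d2comp X V i j) X := by
    apply hasFDerivAt_pi''
    intro i
    apply hasFDerivAt_pi''
    intro j
    exact hasFDerivAt_D1V_comp hσ V i j
  exact (((eLN m n).symm : (Fin m → Fin n → ℝ) →L[ℝ] Emat m n).hasFDerivAt).comp X hpi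

lemma second_deriv_entry {X : Emat m n} (hσ : ∀ i, 0 < rowSigma X i) (U V : Emat m n)
    (i : Fin m) (j : Fin n) :
    fderiv ℝ (fderiv ℝ (fun Y : Emat m n => layerNorm Y)) X U V i j = D2c X U V i j := by
  have hd2 : DifferentiableAt ℝ (fderiv ℝ (fun Z : Emat m n => layerNorm Z)) X :=
    differentiableAt_fderiv_layerNorm hσ
  -- step 1 : evaluation
  have happ := ((ContinuousLinearMap.apply ℝ (Emat m n) V).hasFDerivAt).comp X hd2.hasFDerivAt
  have h1 : fderiv ℝ (fun Y : Emat m n => fderiv ℝ (fun Z : Emat m n => layerNorm Z) Y V) X U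
      = fderiv ℝ (fderiv ℝ (fun Y : Emat m n => layerNorm Y)) X U V := by
    have happ' : HasFDerivAt (fun Y : Emat m n => fderiv ℝ (fun Z : Emat m n => layerNorm Z) Y V)
        (((ContinuousLinearMap.apply ℝ (Emat m n)) V).comp
          (fderiv ℝ (fderiv ℝ fun Z : Emat m n => layerNorm Z) X)) X := happ
    exact (congrArg (fun L => L U) happ'.fderiv).trans rfl
  rw [← h1]
  -- step 2 : eventual equality with D1
  have hev : (fun Y : Emat m n => fderiv ℝ (fun Z : Emat m n => layerNorm Z) Y V)
      =ᶠ[nhds X] (fun Y : Emat m n => D1 Y V) := by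
    have hmem : {Z : Emat m n | ∀ i, 0 < rowSigma Z i} ∈ nhds X :=
      isOpen_good.mem_nhds hσ
    filter_upwards [hmem] with Y hY
    rw [(hasFDerivAt_layerNorm hY).fderiv]
  rw [hev.fderiv_eq]
  -- step 3 : explicit derivative
  rw [(hasFDerivAt_D1V hσ V).fderiv]
  simp [ContinuousLinearMap.pi_apply, d2comp_apply]

lemma frob_eq_norm (A : Emat m n) : frob A = ‖A‖ := by
  rw [frob, Matrix.frobenius_norm_def]
  rw [← Real.sqrt_eq_rpow]
  congr 1
  refine Finset.sum_congr rfl fun i _ => Finset.sum_congr rfl fun j _ => ?_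
  have h2 : ‖A i j‖ ^ (2:ℝ) = ‖A i j‖ ^ (2:ℕ) := by
    rw [← Real.rpow_natCast]; norm_num
  rw [h2, Real.norm_eq_abs, sq_abs]

lemma frob_nonneg (A : Emat m n) : 0 ≤ frob A := Real.sqrt_nonneg _

lemma frob_sq (A : Emat m n) : frob A ^ 2 = ∑ i, ∑ j, A i j ^ 2 :=
  Real.sq_sqrt (Finset.sum_nonneg fun i _ => Finset.sum_nonneg fun j _ => sq_nonneg _)

lemma frob_le {A : Emat m n} {B : ℝ} (hB : 0 ≤ B) (h : ∑ i, ∑ j, A i j ^ 2 ≤ B ^ 2) :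
    frob A ≤ B := by
  rw [frob]
  calc Real.sqrt (∑ i, ∑ j, A i j ^ 2) ≤ Real.sqrt (B ^ 2) := Real.sqrt_le_sqrt h
    _ = B := by rw [Real.sqrt_sq hB]

lemma centered_entry (U : Emat m n) (i : Fin m) (j : Fin n) :
    centered U i j = U i j - (n : ℝ)⁻¹ * ∑ k, U i k := by
  simp only [centered, centerC, Matrix.mul_apply, Matrix.sub_apply, Matrix.smul_apply,
    Matrix.one_apply, Matrix.of_apply, smul_eq_mul, mul_one, mul_sub]
  rw [Finset.sum_sub_distrib]
  congr 1
  · simp [Finset.sum_ite_eq', mul_comm]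
  · rw [Finset.mul_sum]
    exact Finset.sum_congr rfl fun k _ => by ring

lemma sum_sq_centered_le (U : Emat m n) (i : Fin m) :
    ∑ j, centered U i j ^ 2 ≤ ∑ j, U i j ^ 2 := by
  rcases Nat.eq_zero_or_pos n with h0 | hn
  · subst h0; simp
  set μ := (n : ℝ)⁻¹ * ∑ k, U i k with hμ
  have hn' : (n : ℝ) ≠ 0 := Nat.cast_ne_zero.mpr hn.ne'
  have hsum : ∑ k, U i k = (n : ℝ) * μ := by rw [hμ]; field_simp
  have expand : ∀ j, centered U i j ^ 2 = U i j ^ 2 - 2 * μ * U i j + μ ^ 2 := by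
    intro j; rw [centered_entry, ← hμ]; ring
  rw [Finset.sum_congr rfl fun j _ => expand j]
  rw [Finset.sum_add_distrib, Finset.sum_sub_distrib, ← Finset.mul_sum, hsum,
    Finset.sum_const, Finset.card_univ, Fintype.card_fin, nsmul_eq_mul]
  nlinarith [sq_nonneg μ, Nat.cast_nonneg (α := ℝ) n]

lemma spec_nonneg (A : Emat m n) : 0 ≤ spec A := norm_nonneg _

lemma row_sq_le_spec (X : Emat m n) (i : Fin m) :
    ∑ j, X i j ^ 2 ≤ spec X ^ 2 := by
  set s := ∑ j, X i j ^ 2 with hs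
  have hs0 : 0 ≤ s := Finset.sum_nonneg fun j _ => sq_nonneg _
  set v : Fin n → ℝ := fun j => X i j with hv
  set u : EuclideanSpace ℝ (Fin n) := (WithLp.equiv 2 _).symm v with hu
  have hnormu : ‖u‖ = Real.sqrt s := by
    rw [EuclideanSpace.norm_eq]
    congr 1
    exact Finset.sum_congr rfl fun j _ => by
      simp [hu, hv, Real.norm_eq_abs, sq_abs]
  have happ : Matrix.toEuclideanLin X u = (WithLp.equiv 2 _).symm (X *ᵥ v) := by
    rw [hu]; rfl
  have hwi : (X *ᵥ v) i = s := by
    simp [Matrix.mulVec, dotProduct, hv, hs, sq]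
  have hle : ‖Matrix.toEuclideanLin X u‖ ≤ spec X * ‖u‖ := by
    have := (LinearMap.toContinuousLinearMap (Matrix.toEuclideanLin X)).le_opNorm u
    simpa [spec] using this
  have hcoord : s ≤ ‖Matrix.toEuclideanLin X u‖ := by
    rw [happ]
    set w : EuclideanSpace ℝ (Fin m) := (WithLp.equiv 2 _).symm (X *ᵥ v) with hw
    have hwi' : w i = s := by rw [hw]; simpa using hwi
    rw [EuclideanSpace.norm_eq]
    have h1 : s = Real.sqrt (s ^ 2) := (Real.sqrt_sq hs0).symm
    rw [h1]
    apply Real.sqrt_le_sqrt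
    calc s ^ 2 = ‖w i‖ ^ 2 := by rw [hwi', Real.norm_eq_abs, sq_abs]
      _ ≤ ∑ k, ‖w k‖ ^ 2 :=
          Finset.single_le_sum (f := fun k => ‖w k‖ ^ 2) (fun k _ => sq_nonneg _)
            (Finset.mem_univ i)
  have key : s ≤ spec X * Real.sqrt s := by
    calc s ≤ ‖Matrix.toEuclideanLin X u‖ := hcoord
      _ ≤ spec X * ‖u‖ := hle
      _ = spec X * Real.sqrt s := by rw [hnormu]
  nlinarith [Real.sq_sqrt hs0, Real.sqrt_nonneg s, spec_nonneg X]

lemma row_cent_le_frob (U : Emat m n) (i : Fin m) :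
    ∑ j, centered U i j ^ 2 ≤ frob U ^ 2 := by
  rw [frob_sq]
  calc ∑ j, centered U i j ^ 2 ≤ ∑ j, U i j ^ 2 := sum_sq_centered_le U i
    _ ≤ ∑ i, ∑ j, U i j ^ 2 :=
        Finset.single_le_sum (f := fun i => ∑ j, U i j ^ 2)
          (fun _ _ => Finset.sum_nonneg fun _ _ => sq_nonneg _) (Finset.mem_univ i)

lemma total_cent_le_frob (U : Emat m n) :
    ∑ i, ∑ j, centered U i j ^ 2 ≤ frob U ^ 2 := by
  rw [frob_sq]
  exact Finset.sum_le_sum fun i _ => sum_sq_centered_le U i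

lemma row_centX_le_spec (X : Emat m n) (i : Fin m) :
    ∑ j, centered X i j ^ 2 ≤ spec X ^ 2 :=
  le_trans (sum_sq_centered_le X i) (row_sq_le_spec X i)

lemma af_sq_le (Y U : Emat m n) (i : Fin m) :
    af Y U i ^ 2 ≤ ((n:ℝ)⁻¹) ^ 2 * ((∑ j, centered Y i j ^ 2) * (∑ j, centered U i j ^ 2)) := by
  have h := Finset.sum_mul_sq_le_sq_mul_sq Finset.univ
    (fun j => centered Y i j) (fun j => centered U i j)
  have h2 : af Y U i ^ 2 = ((n:ℝ)⁻¹) ^ 2 * (∑ j, centered Y i j * centered U i j) ^ 2 := by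
    rw [af]; ring
  rw [h2]
  exact mul_le_mul_of_nonneg_left h (sq_nonneg _)

lemma term_bound (r : Fin m → ℝ) (M : Emat m n) (G : Fin m → ℝ) (K B : ℝ)
    (hB : 0 ≤ B) (hg : ∀ i, r i ^ 2 ≤ G i) (hM : ∀ i, ∑ j, M i j ^ 2 ≤ K)
    (hGK : (∑ i, G i) * K ≤ B ^ 2) :
    frob (Matrix.of fun i j => r i * M i j) ≤ B := by
  apply frob_le hB
  calc ∑ i, ∑ j, (Matrix.of fun i j => r i * M i j) i j ^ 2
      = ∑ i, r i ^ 2 * ∑ j, M i j ^ 2 := by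
        refine Finset.sum_congr rfl fun i _ => ?_
        rw [Finset.mul_sum]
        exact Finset.sum_congr rfl fun j _ => by simp [Matrix.of_apply]; ring
    _ ≤ ∑ i, G i * K := Finset.sum_le_sum fun i _ =>
        mul_le_mul (hg i) (hM i) (Finset.sum_nonneg fun _ _ => sq_nonneg _)
          (le_trans (sq_nonneg _) (hg i))
    _ = (∑ i, G i) * K := (Finset.sum_mul _ _ _).symm
    _ ≤ B ^ 2 := hGK

lemma two_le_n {X : Emat m n} (hm : 0 < m) (hσ : ∀ i, 0 < rowSigma X i) : 2 ≤ n := by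
  by_contra h
  push_neg at h
  interval_cases n
  · have := hσ ⟨0, hm⟩
    simp [rowSigma] at this
  · have := hσ ⟨0, hm⟩
    have hc : ∀ j, centered X ⟨0, hm⟩ j = 0 := by
      intro j
      rw [centered_entry]
      have : j = 0 := Subsingleton.elim _ _
      subst this
      simp
    simp [rowSigma, hc] at this

lemma term_bound2 (r : Fin m → ℝ) (M W : Emat m n) (c K B : ℝ)
    (hB : 0 ≤ B) (hc : 0 ≤ c) (hK : 0 ≤ K)
    (hg : ∀ i, r i ^ 2 ≤ c * ∑ j, centered W i j ^ 2)
    (hM : ∀ i, ∑ j, M i j ^ 2 ≤ K)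
    (hGK : c * frob W ^ 2 * K ≤ B ^ 2) :
    frob (Matrix.of fun i j => r i * M i j) ≤ B := by
  apply term_bound r M (fun i => c * ∑ j, centered W i j ^ 2) K B hB hg hM
  have hsum : ∑ i, (c * ∑ j, centered W i j ^ 2) = c * ∑ i, ∑ j, centered W i j ^ 2 :=
    (Finset.mul_sum _ _ _).symm
  rw [hsum]
  refine le_trans ?_ hGK
  have ht := total_cent_le_frob W
  nlinarith [mul_nonneg (mul_nonneg hc (sub_nonneg.mpr ht)) hK]

end Aux

set_option maxHeartbeats 1000000 in
/-- LayerNorm Hessian norm bound.  With `σ_min = min_i σᵢ(X) > 0`, the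
second Fréchet derivative of LayerNorm at `X` satisfies
`‖D²LayerNorm(X)[U,V]‖_F ≤ [(‖X‖₂/σ_min³)·(1 + sqrt(m/n)) + ‖X‖₂²/(√n·σ_min³)
  + 3·‖X‖₂³/(n·σ_min⁵)]·‖U‖_F·‖V‖_F`. -/
theorem layerNorm_hessian_norm_bound {m n : ℕ} (hm : 0 < m)
    (X : Matrix (Fin m) (Fin n) ℝ) (hσ : ∀ i, 0 < rowSigma X i) :
    DifferentiableAt ℝ (fun Y : Matrix (Fin m) (Fin n) ℝ => layerNorm Y) X ∧
    DifferentiableAt ℝ (fderiv ℝ (fun Y : Matrix (Fin m) (Fin n) ℝ => layerNorm Y)) X ∧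
    ∀ U V : Matrix (Fin m) (Fin n) ℝ,
      frob (fderiv ℝ (fderiv ℝ (fun Y : Matrix (Fin m) (Fin n) ℝ => layerNorm Y)) X U V) ≤
        (spec X / (⨅ i, rowSigma X i) ^ 3 * (1 + Real.sqrt ((m : ℝ) / n)) +
          spec X ^ 2 / (Real.sqrt n * (⨅ i, rowSigma X i) ^ 3) +
          3 * spec X ^ 3 / ((n : ℝ) * (⨅ i, rowSigma X i) ^ 5)) * frob U * frob V := by
  haveI : Nonempty (Fin m) := ⟨⟨0, hm⟩⟩
  refine ⟨(hasFDerivAt_layerNorm hσ).differentiableAt, differentiableAt_fderiv_layerNorm hσ, ?_⟩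
  intro U V
  set σm := ⨅ i, rowSigma X i with hσm
  have hbdd : BddBelow (Set.range (rowSigma X)) := (Set.finite_range _).bddBelow
  have hσle : ∀ i, σm ≤ rowSigma X i := fun i => ciInf_le hbdd i
  have hσ0 : 0 < σm := by
    obtain ⟨i0, hi0⟩ := Finite.exists_min (rowSigma X)
    exact lt_of_lt_of_le (hσ i0) (le_ciInf hi0)
  have hn2 := two_le_n hm hσ
  have hn0 : (0:ℝ) < n := by
    have : (2:ℝ) ≤ n := by exact_mod_cast hn2
    linarith
  set S := spec X with hS
  have hS0 : 0 ≤ S := spec_nonneg X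
  have hfU := frob_nonneg U
  have hfV := frob_nonneg V
  have hinv : ∀ i, (rowSigma X i)⁻¹ ≤ σm⁻¹ := fun i => by
    exact inv_anti₀ hσ0 (hσle i)
  have hinv0 : ∀ i, (0:ℝ) ≤ (rowSigma X i)⁻¹ := fun i => inv_nonneg.mpr (hσ i).le
  have hinvpow : ∀ (k : ℕ) (i : Fin m), ((rowSigma X i)⁻¹) ^ k ≤ (σm⁻¹) ^ k :=
    fun k i => pow_le_pow_left₀ (hinv0 i) (hinv i) k
  -- decomposition
  set T1 : Emat m n := Matrix.of fun i j =>
    (-((rowSigma X i)⁻¹ ^ 3) * af X U i) * centered V i j with hT1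
  set T2 : Emat m n := Matrix.of fun i j =>
    (-((rowSigma X i)⁻¹ ^ 3) * af X V i) * centered U i j with hT2
  set T3 : Emat m n := Matrix.of fun i j =>
    (3 * (rowSigma X i)⁻¹ ^ 5 * af X U i * af X V i) * centered X i j with hT3
  set T4 : Emat m n := Matrix.of fun i j =>
    (-((rowSigma X i)⁻¹ ^ 3) * af U V i) * centered X i j with hT4
  have hsplit : fderiv ℝ (fderiv ℝ (fun Y : Matrix (Fin m) (Fin n) ℝ => layerNorm Y)) X U V
      = T1 + T2 + T3 + T4 := by
    ext i j
    rw [second_deriv_entry hσ U V i j]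
    simp only [hT1, hT2, hT3, hT4, Matrix.add_apply, Matrix.of_apply, D2c]
    ring
  -- bounds on each term
  have hrowXs : ∀ i, ∑ j, centered X i j ^ 2 ≤ S ^ 2 := fun i => row_centX_le_spec X i
  have hgen : ∀ (W Z : Emat m n) (i : Fin m),
      af X W i ^ 2 ≤ ((n:ℝ)⁻¹) ^ 2 * S ^ 2 * ∑ j, centered W i j ^ 2 := by
    intro W Z i
    refine le_trans (af_sq_le X W i) ?_
    have h1 : 0 ≤ ∑ j, centered W i j ^ 2 := Finset.sum_nonneg fun _ _ => sq_nonneg _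
    calc ((n:ℝ)⁻¹) ^ 2 * ((∑ j, centered X i j ^ 2) * (∑ j, centered W i j ^ 2))
        ≤ ((n:ℝ)⁻¹) ^ 2 * (S ^ 2 * ∑ j, centered W i j ^ 2) := by
          apply mul_le_mul_of_nonneg_left (mul_le_mul_of_nonneg_right (hrowXs i) h1) (sq_nonneg _)
      _ = ((n:ℝ)⁻¹) ^ 2 * S ^ 2 * ∑ j, centered W i j ^ 2 := by ring
  have hb1 : frob T1 ≤ (n:ℝ)⁻¹ * σm⁻¹ ^ 3 * S * frob U * frob V := by
    rw [hT1]
    apply term_bound2 _ _ U ((σm⁻¹) ^ 6 * (((n:ℝ)⁻¹) ^ 2 * S ^ 2)) (frob V ^ 2)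
    · positivity
    · positivity
    · positivity
    · intro i
      have h1 : (-((rowSigma X i)⁻¹ ^ 3) * af X U i) ^ 2
          = ((rowSigma X i)⁻¹) ^ 6 * af X U i ^ 2 := by ring
      rw [h1]
      calc ((rowSigma X i)⁻¹) ^ 6 * af X U i ^ 2
          ≤ (σm⁻¹) ^ 6 * (((n:ℝ)⁻¹) ^ 2 * S ^ 2 * ∑ j, centered U i j ^ 2) :=
            mul_le_mul (hinvpow 6 i) (hgen U U i) (sq_nonneg _) (by positivity)
        _ = (σm⁻¹) ^ 6 * (((n:ℝ)⁻¹) ^ 2 * S ^ 2) * ∑ j, centered U i j ^ 2 := by ring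
    · intro i; exact row_cent_le_frob V i
    · exact le_of_eq (by ring)
  have hb2 : frob T2 ≤ (n:ℝ)⁻¹ * σm⁻¹ ^ 3 * S * frob U * frob V := by
    rw [hT2]
    apply term_bound2 _ _ V ((σm⁻¹) ^ 6 * (((n:ℝ)⁻¹) ^ 2 * S ^ 2)) (frob U ^ 2)
    · positivity
    · positivity
    · positivity
    · intro i
      have h1 : (-((rowSigma X i)⁻¹ ^ 3) * af X V i) ^ 2
          = ((rowSigma X i)⁻¹) ^ 6 * af X V i ^ 2 := by ring
      rw [h1]
      calc ((rowSigma X i)⁻¹) ^ 6 * af X V i ^ 2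
          ≤ (σm⁻¹) ^ 6 * (((n:ℝ)⁻¹) ^ 2 * S ^ 2 * ∑ j, centered V i j ^ 2) :=
            mul_le_mul (hinvpow 6 i) (hgen V V i) (sq_nonneg _) (by positivity)
        _ = (σm⁻¹) ^ 6 * (((n:ℝ)⁻¹) ^ 2 * S ^ 2) * ∑ j, centered V i j ^ 2 := by ring
    · intro i; exact row_cent_le_frob U i
    · exact le_of_eq (by ring)
  have hb3 : frob T3 ≤ 3 * ((n:ℝ)⁻¹) ^ 2 * σm⁻¹ ^ 5 * S ^ 3 * frob U * frob V := by
    rw [hT3]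
    apply term_bound2 _ _ U
      (9 * (σm⁻¹) ^ 10 * (((n:ℝ)⁻¹) ^ 2 * S ^ 2) * (((n:ℝ)⁻¹) ^ 2 * S ^ 2 * frob V ^ 2)) (S ^ 2)
    · positivity
    · positivity
    · positivity
    · intro i
      have h1 : (3 * (rowSigma X i)⁻¹ ^ 5 * af X U i * af X V i) ^ 2
          = 9 * ((rowSigma X i)⁻¹) ^ 10 * (af X U i ^ 2 * af X V i ^ 2) := by ring
      rw [h1]
      have hU' := hgen U U i
      have hV' : af X V i ^ 2 ≤ ((n:ℝ)⁻¹) ^ 2 * S ^ 2 * frob V ^ 2 := by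
        refine le_trans (hgen V V i) ?_
        apply mul_le_mul_of_nonneg_left (row_cent_le_frob V i) (by positivity)
      have h10 := hinvpow 10 i
      have hprod : af X U i ^ 2 * af X V i ^ 2
          ≤ (((n:ℝ)⁻¹) ^ 2 * S ^ 2 * ∑ j, centered U i j ^ 2)
            * (((n:ℝ)⁻¹) ^ 2 * S ^ 2 * frob V ^ 2) :=
        mul_le_mul hU' hV' (sq_nonneg _) (by positivity)
      calc 9 * ((rowSigma X i)⁻¹) ^ 10 * (af X U i ^ 2 * af X V i ^ 2)
          ≤ 9 * (σm⁻¹) ^ 10 * ((((n:ℝ)⁻¹) ^ 2 * S ^ 2 * ∑ j, centered U i j ^ 2)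
              * (((n:ℝ)⁻¹) ^ 2 * S ^ 2 * frob V ^ 2)) := by
            apply mul_le_mul (by linarith [h10]) hprod
              (mul_nonneg (sq_nonneg _) (sq_nonneg _)) (by positivity)
        _ = 9 * (σm⁻¹) ^ 10 * (((n:ℝ)⁻¹) ^ 2 * S ^ 2) * (((n:ℝ)⁻¹) ^ 2 * S ^ 2 * frob V ^ 2)
              * ∑ j, centered U i j ^ 2 := by ring
    · intro i; exact hrowXs i
    · exact le_of_eq (by ring)
  have hb4 : frob T4 ≤ (n:ℝ)⁻¹ * σm⁻¹ ^ 3 * S * frob U * frob V := by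
    rw [hT4]
    apply term_bound2 _ _ U ((σm⁻¹) ^ 6 * (((n:ℝ)⁻¹) ^ 2 * frob V ^ 2)) (S ^ 2)
    · positivity
    · positivity
    · positivity
    · intro i
      have h1 : (-((rowSigma X i)⁻¹ ^ 3) * af U V i) ^ 2
          = ((rowSigma X i)⁻¹) ^ 6 * af U V i ^ 2 := by ring
      rw [h1]
      have hUV : af U V i ^ 2 ≤ ((n:ℝ)⁻¹) ^ 2 * frob V ^ 2 * ∑ j, centered U i j ^ 2 := by
        refine le_trans (af_sq_le U V i) ?_
        have h2 : 0 ≤ ∑ j, centered U i j ^ 2 := Finset.sum_nonneg fun _ _ => sq_nonneg _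
        calc ((n:ℝ)⁻¹) ^ 2 * ((∑ j, centered U i j ^ 2) * (∑ j, centered V i j ^ 2))
            ≤ ((n:ℝ)⁻¹) ^ 2 * ((∑ j, centered U i j ^ 2) * frob V ^ 2) := by
              apply mul_le_mul_of_nonneg_left
                (mul_le_mul_of_nonneg_left (row_cent_le_frob V i) h2) (sq_nonneg _)
          _ = ((n:ℝ)⁻¹) ^ 2 * frob V ^ 2 * ∑ j, centered U i j ^ 2 := by ring
      calc ((rowSigma X i)⁻¹) ^ 6 * af U V i ^ 2
          ≤ (σm⁻¹) ^ 6 * (((n:ℝ)⁻¹) ^ 2 * frob V ^ 2 * ∑ j, centered U i j ^ 2) :=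
            mul_le_mul (hinvpow 6 i) hUV (sq_nonneg _) (by positivity)
        _ = (σm⁻¹) ^ 6 * (((n:ℝ)⁻¹) ^ 2 * frob V ^ 2) * ∑ j, centered U i j ^ 2 := by ring
    · intro i; exact hrowXs i
    · exact le_of_eq (by ring)
  -- triangle inequality
  have htri : frob (T1 + T2 + T3 + T4) ≤ frob T1 + frob T2 + frob T3 + frob T4 := by
    rw [frob_eq_norm, frob_eq_norm, frob_eq_norm, frob_eq_norm, frob_eq_norm]
    calc ‖T1 + T2 + T3 + T4‖ ≤ ‖T1 + T2 + T3‖ + ‖T4‖ := norm_add_le _ _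
      _ ≤ ‖T1 + T2‖ + ‖T3‖ + ‖T4‖ := by linarith [norm_add_le (T1 + T2) T3]
      _ ≤ ‖T1‖ + ‖T2‖ + ‖T3‖ + ‖T4‖ := by linarith [norm_add_le T1 T2]
  -- final arithmetic
  have key1 : 3 * (n:ℝ)⁻¹ ≤ 1 + Real.sqrt ((m : ℝ) / n) := by
    rcases le_or_gt 3 n with h3 | h3
    · have : (3:ℝ) ≤ n := by exact_mod_cast h3
      have h1 : 3 * (n:ℝ)⁻¹ ≤ 1 := by
        rw [← div_eq_mul_inv, div_le_one hn0]; linarith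
      linarith [Real.sqrt_nonneg ((m:ℝ)/n)]
    · have hn2' : n = 2 := by omega
      subst hn2'
      have hm1 : (1:ℝ) ≤ m := by exact_mod_cast hm
      have h1 : (1:ℝ)/2 ≤ (m:ℝ)/2 := by linarith
      have h2 : Real.sqrt ((1:ℝ)/2) ≤ Real.sqrt ((m:ℝ)/2) := Real.sqrt_le_sqrt h1
      have h3' : (1:ℝ)/2 ≤ Real.sqrt ((1:ℝ)/2) := by
        rw [Real.le_sqrt (by norm_num) (by norm_num)]
        norm_num
      have h4 : (1:ℝ)/2 ≤ Real.sqrt ((m:ℝ)/2) := le_trans h3' h2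
      push_cast
      push_cast at h4
      linarith
  -- combine
  rw [hsplit]
  refine le_trans htri ?_
  refine le_trans (add_le_add (add_le_add (add_le_add hb1 hb2) hb3) hb4) ?_
  have hF : 0 ≤ frob U * frob V := mul_nonneg hfU hfV
  have hσne : σm ≠ 0 := ne_of_gt hσ0
  have hnne : (n:ℝ) ≠ 0 := ne_of_gt hn0
  have hsqn0 : (0:ℝ) < Real.sqrt n := Real.sqrt_pos.mpr hn0
  have hRHS : S / σm ^ 3 * (1 + Real.sqrt ((m : ℝ) / n)) + S ^ 2 / (Real.sqrt n * σm ^ 3)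
      + 3 * S ^ 3 / ((n : ℝ) * σm ^ 5)
      = S * σm⁻¹ ^ 3 * (1 + Real.sqrt ((m : ℝ) / n)) + S ^ 2 * (Real.sqrt n)⁻¹ * σm⁻¹ ^ 3
        + 3 * S ^ 3 * (n:ℝ)⁻¹ * σm⁻¹ ^ 5 := by
    field_simp
  have hc1 : 3 * ((n:ℝ)⁻¹ * σm⁻¹ ^ 3 * S) ≤ S * σm⁻¹ ^ 3 * (1 + Real.sqrt ((m : ℝ) / n)) := by
    calc 3 * ((n:ℝ)⁻¹ * σm⁻¹ ^ 3 * S) = (3 * (n:ℝ)⁻¹) * (S * σm⁻¹ ^ 3) := by ring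
      _ ≤ (1 + Real.sqrt ((m : ℝ) / n)) * (S * σm⁻¹ ^ 3) :=
          mul_le_mul_of_nonneg_right key1 (mul_nonneg hS0 (by positivity))
      _ = S * σm⁻¹ ^ 3 * (1 + Real.sqrt ((m : ℝ) / n)) := by ring
  have hc2 : (0:ℝ) ≤ S ^ 2 * (Real.sqrt n)⁻¹ * σm⁻¹ ^ 3 := by positivity
  have hninv1 : (n:ℝ)⁻¹ ≤ 1 := by
    rw [inv_le_one_iff₀]
    right
    linarith [show (2:ℝ) ≤ n from by exact_mod_cast hn2]
  have hninv0 : (0:ℝ) ≤ (n:ℝ)⁻¹ := inv_nonneg.mpr hn0.le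
  have hninvsq : ((n:ℝ)⁻¹) ^ 2 ≤ (n:ℝ)⁻¹ := by nlinarith
  have hc3 : 3 * ((n:ℝ)⁻¹) ^ 2 * σm⁻¹ ^ 5 * S ^ 3 ≤ 3 * S ^ 3 * (n:ℝ)⁻¹ * σm⁻¹ ^ 5 := by
    calc 3 * ((n:ℝ)⁻¹) ^ 2 * σm⁻¹ ^ 5 * S ^ 3
        = ((n:ℝ)⁻¹) ^ 2 * (3 * σm⁻¹ ^ 5 * S ^ 3) := by ring
      _ ≤ (n:ℝ)⁻¹ * (3 * σm⁻¹ ^ 5 * S ^ 3) := by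
          apply mul_le_mul_of_nonneg_right hninvsq
          have : (0:ℝ) ≤ σm⁻¹ ^ 5 := by positivity
          have h3 : (0:ℝ) ≤ S ^ 3 := pow_nonneg hS0 3
          nlinarith
      _ = 3 * S ^ 3 * (n:ℝ)⁻¹ * σm⁻¹ ^ 5 := by ring
  have hcoef : 3 * ((n:ℝ)⁻¹ * σm⁻¹ ^ 3 * S) + 3 * ((n:ℝ)⁻¹) ^ 2 * σm⁻¹ ^ 5 * S ^ 3
      ≤ S * σm⁻¹ ^ 3 * (1 + Real.sqrt ((m : ℝ) / n)) + S ^ 2 * (Real.sqrt n)⁻¹ * σm⁻¹ ^ 3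
        + 3 * S ^ 3 * (n:ℝ)⁻¹ * σm⁻¹ ^ 5 := by linarith
  calc (n:ℝ)⁻¹ * σm⁻¹ ^ 3 * S * frob U * frob V + (n:ℝ)⁻¹ * σm⁻¹ ^ 3 * S * frob U * frob V
        + 3 * ((n:ℝ)⁻¹) ^ 2 * σm⁻¹ ^ 5 * S ^ 3 * frob U * frob V
        + (n:ℝ)⁻¹ * σm⁻¹ ^ 3 * S * frob U * frob V
      = (3 * ((n:ℝ)⁻¹ * σm⁻¹ ^ 3 * S) + 3 * ((n:ℝ)⁻¹) ^ 2 * σm⁻¹ ^ 5 * S ^ 3)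
          * (frob U * frob V) := by ring
    _ ≤ (S * σm⁻¹ ^ 3 * (1 + Real.sqrt ((m : ℝ) / n)) + S ^ 2 * (Real.sqrt n)⁻¹ * σm⁻¹ ^ 3
          + 3 * S ^ 3 * (n:ℝ)⁻¹ * σm⁻¹ ^ 5) * (frob U * frob V) :=
        mul_le_mul_of_nonneg_right hcoef hF
    _ = (S / σm ^ 3 * (1 + Real.sqrt ((m : ℝ) / n)) + S ^ 2 / (Real.sqrt n * σm ^ 3)
          + 3 * S ^ 3 / ((n : ℝ) * σm ^ 5)) * frob U * frob V := by
        rw [hRHS]; ring
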